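/- Let V be a real normed vector space and let M, A : V → V → ℝ be continuous symmetric bilinear forms with M(v,v) ≥ 0 and A(v,v) ≥ 0 for all v ∈ V. Let T > 0, let u : [0,T] → V be twice continuously differentiable, and suppose there are maps F(t) : V → ℝ and a continuous nonnegative function g : [0,T] → ℝ such that M(u''(t), v) + A(u(t), v) = F(t)(v) for all v ∈ V and all t ∈ [0,T], and such that |F(t)(u'(t))| ≤ g(t) · √(M(u'(t), u'(t))) for all t ∈ [0,T]. Then for every t ∈ [0,T], √(M(u'(t), u'(t)) + A(u(t), u(t))) ≤ √(M(u'(0), u'(0)) + A(u(0), u(0))) + ∫₀ᵗ g(τ) dτ. (This is the abstract core of the paper's stability theorem (Theorem 1) for the semi-discrete virtual element approximation of linear elastodynamics: M plays the role of the discrete mass form m_h, A the discrete stiffness form a_h, F(t) the discrete right-hand side F_h, and g(t) the L²-norm of the load f(t).) -/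

import Mathlib

open MeasureTheory Set

/-- Abstract stability theorem for the semi-discrete virtual element approximation of
linear elastodynamics: `M` plays the role of the discrete mass form `m_h`, `A` the discrete
stiffness form `a_h`, `F t` the discrete right-hand side `F_h`, and `g t` the `L²`-norm of the
load `f(t)`. -/
theorem semidiscrete_stability
    {V : Type*} [NormedAddCommGroup V] [NormedSpace ℝ V]
    (M A : V →L[ℝ] V →L[ℝ] ℝ)
    (hMsymm : ∀ v w : V, M v w = M w v)
    (hAsymm : ∀ v w : V, A v w = A w v)
    (hMpos : ∀ v : V, 0 ≤ M v v)
    (hApos : ∀ v : V, 0 ≤ A v v)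
    (T : ℝ) (hT : 0 < T)
    (u u' u'' : ℝ → V)
    (hu : ∀ t ∈ Icc (0:ℝ) T, HasDerivAt u (u' t) t)
    (hu' : ∀ t ∈ Icc (0:ℝ) T, HasDerivAt u' (u'' t) t)
    (hu'' : ContinuousOn u'' (Icc (0:ℝ) T))
    (F : ℝ → V → ℝ) (g : ℝ → ℝ)
    (hg : ContinuousOn g (Icc (0:ℝ) T))
    (hgpos : ∀ t ∈ Icc (0:ℝ) T, 0 ≤ g t)
    (heq : ∀ t ∈ Icc (0:ℝ) T, ∀ v : V, M (u'' t) v + A (u t) v = F t v)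
    (hb : ∀ t ∈ Icc (0:ℝ) T, |F t (u' t)| ≤ g t * Real.sqrt (M (u' t) (u' t))) :
    ∀ t ∈ Icc (0:ℝ) T,
      Real.sqrt (M (u' t) (u' t) + A (u t) (u t)) ≤
        Real.sqrt (M (u' 0) (u' 0) + A (u 0) (u 0)) + ∫ τ in (0:ℝ)..t, g τ := by
  intro t ht
  set E : ℝ → ℝ := fun s => M (u' s) (u' s) + A (u s) (u s) with hE
  have hEpos : ∀ s, 0 ≤ E s := fun s => add_nonneg (hMpos _) (hApos _)
  -- derivative of E
  have hEderiv : ∀ s ∈ Icc (0:ℝ) T, HasDerivAt E (2 * F s (u' s)) s := by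
    intro s hs
    have h1 : HasDerivAt (fun y => M (u' y) (u' y))
        ((M (u'' s)) (u' s) + (M (u' s)) (u'' s)) s :=
      HasDerivAt.clm_apply (M.hasFDerivAt.comp_hasDerivAt s (hu' s hs)) (hu' s hs)
    have h2 : HasDerivAt (fun y => A (u y) (u y))
        ((A (u' s)) (u s) + (A (u s)) (u' s)) s :=
      HasDerivAt.clm_apply (A.hasFDerivAt.comp_hasDerivAt s (hu s hs)) (hu s hs)
    have := h1.add h2
    refine this.congr_deriv ?_
    have e1 := heq s hs (u' s)
    have e2 := hMsymm (u'' s) (u' s)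
    have e3 := hAsymm (u' s) (u s)
    linarith
  -- continuity facts
  have hcu : ContinuousOn u (Icc (0:ℝ) T) := fun s hs =>
    (hu s hs).continuousAt.continuousWithinAt
  have hcu' : ContinuousOn u' (Icc (0:ℝ) T) := fun s hs =>
    (hu' s hs).continuousAt.continuousWithinAt
  have hcE' : ContinuousOn (fun s => 2 * F s (u' s)) (Icc (0:ℝ) T) := by
    have : ContinuousOn (fun s => 2 * ((M (u'' s)) (u' s) + (A (u s)) (u' s)))
        (Icc (0:ℝ) T) := by
      apply ContinuousOn.mul continuousOn_const
      exact ((M.continuous.comp_continuousOn hu'').clm_apply hcu').add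
        ((A.continuous.comp_continuousOn hcu).clm_apply hcu')
    exact this.congr fun s hs => by dsimp only; rw [heq s hs (u' s)]
  have ht0 : (0:ℝ) ≤ t := ht.1
  have hsub : Icc (0:ℝ) t ⊆ Icc (0:ℝ) T := Icc_subset_Icc le_rfl ht.2
  have huIcc : uIcc (0:ℝ) t = Icc 0 t := uIcc_of_le ht0
  -- integrability of g on [0,t]
  have hgint : IntervalIntegrable g volume 0 t :=
    ContinuousOn.intervalIntegrable (by rw [huIcc]; exact hg.mono hsub)
  -- main epsilon estimate
  have key : ∀ ε > (0:ℝ), Real.sqrt (E t) ≤ Real.sqrt (E 0 + ε) + ∫ τ in (0:ℝ)..t, g τ := by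
    intro ε hε
    set φ : ℝ → ℝ := fun s => Real.sqrt (E s + ε) with hφ
    set φ' : ℝ → ℝ := fun s => 2 * F s (u' s) / (2 * Real.sqrt (E s + ε)) with hφ'
    have hne : ∀ s, E s + ε ≠ 0 := fun s => by have := hEpos s; positivity
    have hφderiv : ∀ s ∈ Icc (0:ℝ) T, HasDerivAt φ (φ' s) s := by
      intro s hs
      exact ((hEderiv s hs).add_const ε).sqrt (hne s)
    have hφ'cont : ContinuousOn φ' (Icc (0:ℝ) T) := by
      apply hcE'.div
      · apply ContinuousOn.mul continuousOn_const
        apply ContinuousOn.sqrt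
        exact (((M.continuous.comp_continuousOn hcu').clm_apply hcu').add
          ((A.continuous.comp_continuousOn hcu).clm_apply hcu)).add continuousOn_const
      · intro s hs
        have : Real.sqrt (E s + ε) > 0 := Real.sqrt_pos.2 (by have := hEpos s; positivity)
        positivity
    have hφ'int : IntervalIntegrable φ' volume 0 t :=
      ContinuousOn.intervalIntegrable (by rw [huIcc]; exact hφ'cont.mono hsub)
    have hftc : ∫ τ in (0:ℝ)..t, φ' τ = φ t - φ 0 :=
      intervalIntegral.integral_eq_sub_of_hasDerivAt
        (fun s hs => hφderiv s (hsub (huIcc ▸ hs))) hφ'int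
    have hmono : ∫ τ in (0:ℝ)..t, φ' τ ≤ ∫ τ in (0:ℝ)..t, g τ := by
      apply intervalIntegral.integral_mono_on ht0 hφ'int hgint
      intro s hs
      have hsT : s ∈ Icc (0:ℝ) T := hsub hs
      have hsq : Real.sqrt ((M (u' s)) (u' s)) ≤ Real.sqrt (E s + ε) := by
        apply Real.sqrt_le_sqrt
        have := hApos (u s)
        simp only [hE]; linarith
      have hFb : F s (u' s) ≤ g s * Real.sqrt ((M (u' s)) (u' s)) :=
        (le_abs_self _).trans (hb s hsT)
      have hsqpos : 0 < Real.sqrt (E s + ε) := Real.sqrt_pos.2 (by have := hEpos s; positivity)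
      rw [hφ']
      rw [div_le_iff₀ (by positivity)]
      calc 2 * F s (u' s) ≤ 2 * (g s * Real.sqrt ((M (u' s)) (u' s))) := by linarith
        _ ≤ 2 * (g s * Real.sqrt (E s + ε)) := by
            have := hgpos s hsT
            nlinarith
        _ = g s * (2 * Real.sqrt (E s + ε)) := by ring
    have h1 : Real.sqrt (E t) ≤ φ t :=
      Real.sqrt_le_sqrt (by linarith [hε.le])
    have h2 : φ t ≤ φ 0 + ∫ τ in (0:ℝ)..t, g τ := by linarith [hftc ▸ hmono]
    exact h1.trans h2
  -- take ε → 0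
  have hlim : Filter.Tendsto (fun ε => Real.sqrt (E 0 + ε) + ∫ τ in (0:ℝ)..t, g τ)
      (nhdsWithin 0 (Ioi 0)) (nhds (Real.sqrt (E 0) + ∫ τ in (0:ℝ)..t, g τ)) := by
    have : Filter.Tendsto (fun ε : ℝ => Real.sqrt (E 0 + ε)) (nhds 0)
        (nhds (Real.sqrt (E 0))) := by
      have : Continuous (fun ε : ℝ => Real.sqrt (E 0 + ε)) :=
        Real.continuous_sqrt.comp (continuous_const.add continuous_id)
      simpa using this.tendsto 0
    exact ((this.mono_left nhdsWithin_le_nhds).add tendsto_const_nhds)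
  exact ge_of_tendsto hlim (eventually_nhdsWithin_of_forall fun ε hε => key ε hε)
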